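/- Let P be a multilinear Boolean polynomial with cls(P) = k, and let 1 ≤ j ≤ k. Let O_{j,k} be the set of all 2^{k−j+1} composite operators O_j ∘ O_{j+1} ∘ ⋯ ∘ O_k where each O_i is either R_i or J_i. Then the sum over all L ∈ O_{j,k} of ||L(P)|| is at most ||P||. -/

import Mathlib

open MvPolynomial

/-- The class of a Boolean polynomial: the largest `c` such that `x_c` occurs in `P`,
with variables numbered `1,…,n` (variable `Fin`-index `i` has number `i+1`);
`cls P = 0` for constants (and for `0`). -/
noncomputable def cls {n : ℕ} (P : MvPolynomial (Fin n) (ZMod 2)) : ℕ :=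
  P.vars.sup fun i => (i : ℕ) + 1

/-- Writing a multilinear `P` as `P = I·x_k + U` with `I, U` not involving `x_k`,
this is `I`. -/
noncomputable def coefAt {n : ℕ} (k : Fin n) (P : MvPolynomial (Fin n) (ZMod 2)) :
    MvPolynomial (Fin n) (ZMod 2) :=
  ∑ m ∈ P.support.filter fun m => m k = 1,
    monomial (Finsupp.erase k m) (coeff m P)

/-- Writing a multilinear `P` as `P = I·x_k + U` with `I, U` not involving `x_k`,
this is `U`. -/
noncomputable def remAt {n : ℕ} (k : Fin n) (P : MvPolynomial (Fin n) (ZMod 2)) :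
    MvPolynomial (Fin n) (ZMod 2) :=
  ∑ m ∈ P.support.filter fun m => m k = 0, monomial m (coeff m P)

/-- The operator `R_k`: for `P = I·x_k + U`, `R_k(P) = U` if `cls P = k`, and
`R_k(P) = P` if `cls P < k` (in particular `R_k(0) = 0`). -/
noncomputable def opR {n : ℕ} (k : Fin n) (P : MvPolynomial (Fin n) (ZMod 2)) :
    MvPolynomial (Fin n) (ZMod 2) :=
  if cls P = (k : ℕ) + 1 then remAt k P else P

/-- The operator `J_k`: for `P = I·x_k + U`, `J_k(P) = I + 1` if `cls P = k`, and
`J_k(P) = 0` if `cls P < k` (in particular `J_k(0) = 0`). -/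
noncomputable def opJ {n : ℕ} (k : Fin n) (P : MvPolynomial (Fin n) (ZMod 2)) :
    MvPolynomial (Fin n) (ZMod 2) :=
  if cls P = (k : ℕ) + 1 then coefAt k P + 1 else 0


/-- The length of a multilinear Boolean polynomial: the sum over its monomials of the
number of variables of the monomial, where the monomial `1` has length `1` (and
`‖0‖ = 0`). -/
noncomputable def plen {n : ℕ} (P : MvPolynomial (Fin n) (ZMod 2)) : ℕ :=
  ∑ m ∈ P.support, if m = 0 then 1 else m.support.card

/-- Apply either `R_i` (if `b = true`) or `J_i` (if `b = false`). -/
noncomputable def opE {n : ℕ} (b : Bool) (i : Fin n)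
    (P : MvPolynomial (Fin n) (ZMod 2)) : MvPolynomial (Fin n) (ZMod 2) :=
  if b then opR i P else opJ i P

/-- The composite operator `O_j ∘ O_{j+1} ∘ ⋯ ∘ O_k` (applied innermost, i.e. `O_k`,
first), where `O_i = R_i` if `ε i = true` and `O_i = J_i` if `ε i = false`. -/
noncomputable def compOp {n : ℕ} (ε : Fin n → Bool) (j k : Fin n)
    (P : MvPolynomial (Fin n) (ZMod 2)) : MvPolynomial (Fin n) (ZMod 2) :=
  (((List.finRange n).filter fun i => decide (j ≤ i ∧ i ≤ k)).foldr
    (fun i acc => opE (ε i) i acc) P)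


section Aux
variable {n : ℕ}

lemma coeff_remAt (k : Fin n) (P : MvPolynomial (Fin n) (ZMod 2)) (m : Fin n →₀ ℕ) :
    coeff m (remAt k P) = if m k = 0 then coeff m P else 0 := by
  classical
  unfold remAt
  rw [MvPolynomial.coeff_sum]
  simp only [MvPolynomial.coeff_monomial]
  rw [Finset.sum_ite_eq' (P.support.filter fun m => m k = 0) m (fun m => coeff m P)]
  by_cases h : m k = 0
  · simp only [h, if_true, Finset.mem_filter, MvPolynomial.mem_support_iff]
    by_cases h2 : coeff m P = 0
    · simp [h2]
    · simp [h2]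
  · simp [h]

lemma support_remAt (k : Fin n) (P : MvPolynomial (Fin n) (ZMod 2)) :
    (remAt k P).support = P.support.filter fun m => m k = 0 := by
  ext m
  simp only [MvPolynomial.mem_support_iff, coeff_remAt, Finset.mem_filter]
  by_cases h : m k = 0 <;> simp [h, and_comm]

lemma erase_eq_self_of_eq_zero {m : Fin n →₀ ℕ} {k : Fin n} (h : m k = 0) :
    Finsupp.erase k m = m := by
  ext i
  by_cases hi : i = k
  · simp [hi, h]
  · simp [Finsupp.erase_ne hi]

lemma coeff_coefAt (k : Fin n) (P : MvPolynomial (Fin n) (ZMod 2)) (m : Fin n →₀ ℕ) :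
    coeff m (coefAt k P) =
      if m k = 0 then coeff (m + Finsupp.single k 1) P else 0 := by
  classical
  unfold coefAt
  rw [MvPolynomial.coeff_sum]
  simp only [MvPolynomial.coeff_monomial]
  by_cases h : m k = 0
  · rw [if_pos h]
    rw [Finset.sum_eq_single (m + Finsupp.single k 1)]
    · rw [if_pos]
      ext i
      by_cases hi : i = k
      · subst hi; simp [h]
      · simp [Finsupp.erase_ne hi, Finsupp.single_apply, Ne.symm hi]
    · intro b hb hne
      rw [if_neg]
      intro he
      apply hne
      rw [Finset.mem_filter] at hb
      have : b = Finsupp.erase k b + Finsupp.single k (b k) := (Finsupp.erase_add_single k b).symm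
      rw [this, he, hb.2]
    · intro ha
      rw [if_pos, MvPolynomial.notMem_support_iff.mp]
      · intro hmem
        exact ha (Finset.mem_filter.mpr ⟨hmem, by simp [h]⟩)
      · ext i
        by_cases hi : i = k
        · subst hi; simp [h]
        · simp [Finsupp.erase_ne hi, Finsupp.single_apply, Ne.symm hi]
  · rw [if_neg h, Finset.sum_eq_zero]
    intro b hb
    rw [if_neg]
    intro he
    apply h
    rw [← he]
    simp

lemma support_coefAt (k : Fin n) (P : MvPolynomial (Fin n) (ZMod 2)) :
    (coefAt k P).support = (P.support.filter fun m => m k = 1).image (Finsupp.erase k) := by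
  ext m
  simp only [MvPolynomial.mem_support_iff, coeff_coefAt, Finset.mem_image, Finset.mem_filter]
  constructor
  · intro h
    by_cases hk : m k = 0
    · rw [if_pos hk] at h
      refine ⟨m + Finsupp.single k 1, ⟨h, by simp [hk]⟩, ?_⟩
      ext i
      by_cases hi : i = k
      · subst hi; simp [hk]
      · simp [Finsupp.erase_ne hi, Finsupp.single_apply, Ne.symm hi]
    · rw [if_neg hk] at h; exact absurd rfl h
  · rintro ⟨b, ⟨hb, hbk⟩, rfl⟩
    have hk : (Finsupp.erase k b) k = 0 := by simp
    rw [if_pos hk]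
    have : Finsupp.erase k b + Finsupp.single k 1 = b := by
      conv_rhs => rw [← Finsupp.erase_add_single k b]
      rw [hbk]
    rw [this]
    exact hb


lemma plen_eq (Q : MvPolynomial (Fin n) (ZMod 2)) :
    plen Q = (∑ m ∈ Q.support, m.support.card) +
      (if (0 : Fin n →₀ ℕ) ∈ Q.support then 1 else 0) := by
  unfold plen
  rw [Finset.sum_congr rfl (fun (m : Fin n →₀ ℕ) _ => show (if m = 0 then 1 else m.support.card)
      = m.support.card + (if m = 0 then 1 else 0) by
    by_cases h : m = 0
    · subst h; simp
    · simp [h])]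
  rw [Finset.sum_add_distrib, Finset.sum_ite_eq' Q.support 0 (fun _ => 1)]

lemma sum_card_le_plen (Q : MvPolynomial (Fin n) (ZMod 2)) :
    (∑ m ∈ Q.support, m.support.card) ≤ plen Q := by
  rw [plen_eq]; exact Nat.le_add_right _ _

lemma sum_card_add_one (I : MvPolynomial (Fin n) (ZMod 2)) :
    ∑ m ∈ (I + 1).support, m.support.card = ∑ m ∈ I.support, m.support.card := by
  have h1 : ∀ (Q : MvPolynomial (Fin n) (ZMod 2)),
      ∑ m ∈ Q.support, m.support.card = ∑ m ∈ Q.support.erase 0, m.support.card :=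
    fun Q => (Finset.sum_erase _ (by simp)).symm
  rw [h1 (I + 1), h1 I]
  congr 1
  ext m
  simp only [Finset.mem_erase, MvPolynomial.mem_support_iff]
  constructor <;> rintro ⟨hm0, hc⟩ <;> refine ⟨hm0, ?_⟩ <;>
    simpa [MvPolynomial.coeff_add, MvPolynomial.coeff_one, Ne.symm hm0] using hc

lemma plen_add_one_le (I : MvPolynomial (Fin n) (ZMod 2)) :
    plen (I + 1) ≤ (∑ m ∈ I.support, m.support.card) + 1 := by
  rw [plen_eq, sum_card_add_one]
  gcongr
  split <;> simp

lemma cls_le_iff {Q : MvPolynomial (Fin n) (ZMod 2)} {c : ℕ} :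
    cls Q ≤ c ↔ ∀ i ∈ Q.vars, (i : ℕ) + 1 ≤ c := Finset.sup_le_iff

lemma mem_vars_of_cls {Q : MvPolynomial (Fin n) (ZMod 2)} {k : Fin n}
    (hcls : cls Q = (k : ℕ) + 1) : k ∈ Q.vars := by
  have hne : Q.vars.Nonempty := by
    rcases Q.vars.eq_empty_or_nonempty with h | h
    · exfalso; unfold cls at hcls; rw [h] at hcls; simp at hcls
    · exact h
  obtain ⟨i, hi, hsup⟩ := Finset.exists_mem_eq_sup Q.vars hne (fun i => (i : ℕ) + 1)
  unfold cls at hcls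
  rw [hcls] at hsup
  have : i = k := Fin.ext (by omega)
  rwa [← this]

lemma base_ineq (k : Fin n) (P : MvPolynomial (Fin n) (ZMod 2))
    (hml : ∀ i, degreeOf i P ≤ 1) (hcls : cls P = (k : ℕ) + 1) :
    plen (remAt k P) + plen (coefAt k P + 1) ≤ plen P := by
  classical
  set S1 := P.support.filter (fun m => m k = 1) with hS1
  set S0 := P.support.filter (fun m => m k = 0) with hS0
  have hS1ne : S1.Nonempty := by
    have hk := mem_vars_of_cls hcls
    rw [MvPolynomial.mem_vars] at hk
    obtain ⟨m, hm, hkm⟩ := hk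
    have h1 : m k ≤ 1 := MvPolynomial.degreeOf_le_iff.mp (hml k) m hm
    have h2 : m k ≠ 0 := Finsupp.mem_support_iff.mp hkm
    exact ⟨m, Finset.mem_filter.mpr ⟨hm, by omega⟩⟩
  -- sum over the image
  have hinj : ∀ m1 ∈ S1, ∀ m2 ∈ S1, Finsupp.erase k m1 = Finsupp.erase k m2 → m1 = m2 := by
    intro m1 h1 m2 h2 he
    rw [Finset.mem_filter] at h1 h2
    calc m1 = Finsupp.erase k m1 + Finsupp.single k (m1 k) := (Finsupp.erase_add_single k m1).symm
    _ = Finsupp.erase k m2 + Finsupp.single k (m2 k) := by rw [he, h1.2, h2.2]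
    _ = m2 := Finsupp.erase_add_single k m2
  have hCI : ∑ m ∈ (coefAt k P).support, m.support.card
      = ∑ m ∈ S1, (Finsupp.erase k m).support.card := by
    rw [support_coefAt, Finset.sum_image hinj]
  have hcard : ∀ m ∈ S1, (Finsupp.erase k m).support.card + 1 = m.support.card := by
    intro m hm
    rw [Finset.mem_filter] at hm
    rw [Finsupp.support_erase]
    exact Finset.card_erase_add_one (Finsupp.mem_support_iff.mpr (by rw [hm.2]; norm_num))
  have hS1sum : ∑ m ∈ S1, m.support.card
      = (∑ m ∈ S1, (Finsupp.erase k m).support.card) + S1.card := by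
    rw [Finset.card_eq_sum_ones, ← Finset.sum_add_distrib]
    exact Finset.sum_congr rfl (fun m hm => (hcard m hm).symm)
  have hJ : plen (coefAt k P + 1) ≤ ∑ m ∈ S1, m.support.card := by
    calc plen (coefAt k P + 1) ≤ (∑ m ∈ (coefAt k P).support, m.support.card) + 1 :=
          plen_add_one_le _
    _ = (∑ m ∈ S1, (Finsupp.erase k m).support.card) + 1 := by rw [hCI]
    _ ≤ (∑ m ∈ S1, (Finsupp.erase k m).support.card) + S1.card := by
          gcongr; exact Nat.one_le_iff_ne_zero.mpr (Finset.card_ne_zero_of_mem hS1ne.choose_spec)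
    _ = ∑ m ∈ S1, m.support.card := hS1sum.symm
  have hsplit : plen P = plen (remAt k P) + ∑ m ∈ S1, m.support.card := by
    unfold plen
    rw [support_remAt, ← hS0]
    have hnot : P.support.filter (fun m => ¬ (m k = 0)) = S1 := by
      rw [hS1]
      apply Finset.filter_congr
      intro m hm
      have h1 : m k ≤ 1 := MvPolynomial.degreeOf_le_iff.mp (hml k) m hm
      constructor <;> intro h <;> simp_all <;> omega
    rw [← Finset.sum_filter_add_sum_filter_not P.support (fun m => m k = 0)
      (fun m => if m = 0 then 1 else m.support.card), hnot, ← hS0]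
    congr 1
    apply Finset.sum_congr rfl
    intro m hm
    rw [Finset.mem_filter] at hm
    rw [if_neg]
    intro h0
    rw [h0] at hm
    simp at hm
  rw [hsplit]
  gcongr

lemma mem_support_one {m : Fin n →₀ ℕ} (h : m ∈ (1 : MvPolynomial (Fin n) (ZMod 2)).support) :
    m = 0 := by
  rw [MvPolynomial.mem_support_iff, MvPolynomial.coeff_one] at h
  by_contra h0
  rw [if_neg (Ne.symm h0)] at h
  exact h rfl

lemma cls_lt_of_ne {Q : MvPolynomial (Fin n) (ZMod 2)} {k : Fin n}
    (h1 : cls Q ≤ (k : ℕ) + 1) (h2 : cls Q ≠ (k : ℕ) + 1) : cls Q ≤ (k : ℕ) := by omega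

lemma plen_zero : plen (0 : MvPolynomial (Fin n) (ZMod 2)) = 0 := by
  unfold plen; simp

lemma cls_zero : cls (0 : MvPolynomial (Fin n) (ZMod 2)) = 0 := by
  unfold cls; simp

lemma cls_remAt_le {k : Fin n} {Q : MvPolynomial (Fin n) (ZMod 2)}
    (hcls : cls Q = (k : ℕ) + 1) : cls (remAt k Q) ≤ (k : ℕ) := by
  rw [cls_le_iff]
  intro i hi
  rw [MvPolynomial.mem_vars] at hi
  obtain ⟨m, hm, him⟩ := hi
  rw [support_remAt, Finset.mem_filter] at hm
  have hiQ : i ∈ Q.vars := (MvPolynomial.mem_vars i).mpr ⟨m, hm.1, him⟩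
  have h1 : (i : ℕ) + 1 ≤ (k : ℕ) + 1 := hcls ▸ cls_le_iff.mp (le_of_eq rfl) i hiQ
  have h2 : i ≠ k := by
    intro h
    subst h
    exact Finsupp.mem_support_iff.mp him hm.2
  have h3 : (i : ℕ) ≠ (k : ℕ) := fun h => h2 (Fin.ext h)
  omega

lemma cls_coefAt_add_one_le {k : Fin n} {Q : MvPolynomial (Fin n) (ZMod 2)}
    (hcls : cls Q = (k : ℕ) + 1) : cls (coefAt k Q + 1) ≤ (k : ℕ) := by
  rw [cls_le_iff]
  intro i hi
  rw [MvPolynomial.mem_vars] at hi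
  obtain ⟨m, hm, him⟩ := hi
  have hm' := MvPolynomial.support_add hm
  rw [Finset.mem_union] at hm'
  rcases hm' with hm' | hm'
  · rw [support_coefAt, Finset.mem_image] at hm'
    obtain ⟨m1, hm1, rfl⟩ := hm'
    rw [Finset.mem_filter] at hm1
    rw [Finsupp.support_erase, Finset.mem_erase] at him
    have hiQ : i ∈ Q.vars := (MvPolynomial.mem_vars i).mpr ⟨m1, hm1.1, him.2⟩
    have h1 : (i : ℕ) + 1 ≤ (k : ℕ) + 1 := hcls ▸ cls_le_iff.mp (le_of_eq rfl) i hiQ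
    have h3 : (i : ℕ) ≠ (k : ℕ) := fun h => him.1 (Fin.ext h)
    omega
  · have : m = 0 := mem_support_one hm'
    subst this
    simp at him

lemma ml_opR {k : Fin n} {Q : MvPolynomial (Fin n) (ZMod 2)}
    (hml : ∀ i, degreeOf i Q ≤ 1) : ∀ i, degreeOf i (opR k Q) ≤ 1 := by
  intro i
  unfold opR
  split
  · rw [MvPolynomial.degreeOf_le_iff]
    intro m hm
    rw [support_remAt, Finset.mem_filter] at hm
    exact MvPolynomial.degreeOf_le_iff.mp (hml i) m hm.1
  · exact hml i

lemma ml_opJ {k : Fin n} {Q : MvPolynomial (Fin n) (ZMod 2)}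
    (hml : ∀ i, degreeOf i Q ≤ 1) : ∀ i, degreeOf i (opJ k Q) ≤ 1 := by
  intro i
  unfold opJ
  split
  · rw [MvPolynomial.degreeOf_le_iff]
    intro m hm
    have hm' := MvPolynomial.support_add hm
    rw [Finset.mem_union] at hm'
    rcases hm' with hm' | hm'
    · rw [support_coefAt, Finset.mem_image] at hm'
      obtain ⟨m1, hm1, rfl⟩ := hm'
      rw [Finset.mem_filter] at hm1
      have := MvPolynomial.degreeOf_le_iff.mp (hml i) m1 hm1.1
      by_cases hik : i = k
      · subst hik; simp
      · rw [Finsupp.erase_ne hik]; exact this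
    · have : m = 0 := mem_support_one hm'
      subst this; simp
  · simp [MvPolynomial.degreeOf_zero]

lemma key_ineq (k : Fin n) (Q : MvPolynomial (Fin n) (ZMod 2))
    (hml : ∀ i, degreeOf i Q ≤ 1) (hcls : cls Q ≤ (k : ℕ) + 1) :
    plen (opR k Q) + plen (opJ k Q) ≤ plen Q := by
  unfold opR opJ
  by_cases h : cls Q = (k : ℕ) + 1
  · rw [if_pos h, if_pos h]
    exact base_ineq k Q hml h
  · rw [if_neg h, if_neg h, plen_zero]
    omega

lemma cls_opE_le {b : Bool} {k : Fin n} {Q : MvPolynomial (Fin n) (ZMod 2)}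
    (hcls : cls Q ≤ (k : ℕ) + 1) : cls (opE b k Q) ≤ (k : ℕ) := by
  cases b <;> unfold opE opR opJ <;> simp only [if_true, if_false, Bool.false_eq_true,
    ite_true, ite_false] <;> by_cases h : cls Q = (k : ℕ) + 1
  · rw [if_pos h]; exact cls_coefAt_add_one_le h
  · rw [if_neg h]; rw [cls_zero]; omega
  · rw [if_pos h]; exact cls_remAt_le h
  · rw [if_neg h]; exact cls_lt_of_ne hcls h

lemma ml_opE {b : Bool} {k : Fin n} {Q : MvPolynomial (Fin n) (ZMod 2)}
    (hml : ∀ i, degreeOf i Q ≤ 1) : ∀ i, degreeOf i (opE b k Q) ≤ 1 := by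
  cases b
  · exact ml_opJ hml
  · exact ml_opR hml

lemma opE_zero (b : Bool) (k : Fin n) : opE b k (0 : MvPolynomial (Fin n) (ZMod 2)) = 0 := by
  have h : cls (0 : MvPolynomial (Fin n) (ZMod 2)) ≠ (k : ℕ) + 1 := by rw [cls_zero]; omega
  cases b <;> simp [opE, opR, opJ, h]


lemma filter_eq_append (p q : Fin n → Bool) (a : Fin n)
    (hpq : ∀ i, p i = true ↔ (q i = true ∨ i = a)) (hq : ∀ i, q i = true → i < a) :
    (List.finRange n).filter p = (List.finRange n).filter q ++ [a] := by
  have hnd1 : ((List.finRange n).filter p).Nodup := (List.nodup_finRange n).filter p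
  have hnd2 : ((List.finRange n).filter q ++ [a]).Nodup := by
    rw [List.nodup_append]
    refine ⟨(List.nodup_finRange n).filter q, List.nodup_singleton a, ?_⟩
    intro x hx
    simp only [List.mem_filter] at hx
    simp only [List.mem_singleton]
    intro y hy hxa
    rw [hy] at hxa
    subst hxa
    exact absurd (hq x hx.2) (lt_irrefl x)
  have hperm : ((List.finRange n).filter p).Perm ((List.finRange n).filter q ++ [a]) := by
    rw [List.perm_ext_iff_of_nodup hnd1 hnd2]
    intro i
    simp only [List.mem_append, List.mem_filter, List.mem_finRange, true_and,
      List.mem_singleton]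
    rw [hpq i]
  refine List.Perm.eq_of_pairwise (le := ((· < ·) : Fin n → Fin n → Prop))
    (fun a b _ _ h1 h2 => absurd (h1.trans h2) (lt_irrefl a)) ?_ ?_ hperm
  · exact (List.pairwise_lt_finRange n).sublist (List.filter_sublist)
  · rw [List.pairwise_append]
    refine ⟨(List.pairwise_lt_finRange n).sublist List.filter_sublist,
      List.pairwise_singleton _ _, ?_⟩
    intro x hx y hy
    rw [List.mem_filter] at hx
    rw [List.mem_singleton] at hy
    subst hy
    exact hq x hx.2

lemma foldr_congr (ε ε' : Fin n → Bool) (l : List (Fin n))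
    (h : ∀ i ∈ l, ε i = ε' i) (P : MvPolynomial (Fin n) (ZMod 2)) :
    l.foldr (fun i acc => opE (ε i) i acc) P = l.foldr (fun i acc => opE (ε' i) i acc) P := by
  induction l with
  | nil => rfl
  | cons head tail ih =>
    simp only [List.foldr_cons]
    rw [ih (fun i hi => h i (List.mem_cons_of_mem head hi)),
      h head List.mem_cons_self]

lemma foldr_zero (ε : Fin n → Bool) (l : List (Fin n)) :
    l.foldr (fun i acc => opE (ε i) i acc) (0 : MvPolynomial (Fin n) (ZMod 2)) = 0 := by
  induction l with
  | nil => rfl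
  | cons head tail ih => simp only [List.foldr_cons, ih, opE_zero]

lemma compOp_zero (ε : Fin n → Bool) (j k : Fin n) :
    compOp ε j k (0 : MvPolynomial (Fin n) (ZMod 2)) = 0 := foldr_zero ε _

lemma compOp_single (ε : Fin n → Bool) (j : Fin n) (Q : MvPolynomial (Fin n) (ZMod 2)) :
    compOp ε j j Q = opE (ε j) j Q := by
  unfold compOp
  rw [filter_eq_append _ (fun _ => false) j]
  · simp
  · intro i
    simp only [decide_eq_true_eq, Bool.false_eq_true, false_or]
    constructor
    · rintro ⟨h1, h2⟩; exact le_antisymm h2 h1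
    · rintro rfl; exact ⟨le_refl i, le_refl i⟩
  · simp

lemma compOp_step (ε : Fin n → Bool) (j k k' : Fin n) (hjk : j < k)
    (hk' : (k' : ℕ) + 1 = (k : ℕ)) (Q : MvPolynomial (Fin n) (ZMod 2)) :
    compOp ε j k Q = compOp ε j k' (opE (ε k) k Q) := by
  unfold compOp
  rw [filter_eq_append (fun i => decide (j ≤ i ∧ i ≤ k)) (fun i => decide (j ≤ i ∧ i ≤ k')) k]
  · rw [List.foldr_append]
    simp
  · intro i
    simp only [decide_eq_true_eq]
    rw [Fin.le_def, Fin.le_def, Fin.le_def, Fin.ext_iff]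
    have := Fin.lt_def.mp hjk
    omega
  · intro i
    simp only [decide_eq_true_eq]
    rintro ⟨h1, h2⟩
    rw [Fin.lt_def]
    rw [Fin.le_def] at h2
    omega


lemma main_ineq (j : Fin n) : ∀ (d : ℕ) (k : Fin n), j ≤ k → (k : ℕ) - (j : ℕ) = d →
    ∀ Q : MvPolynomial (Fin n) (ZMod 2), (∀ i, degreeOf i Q ≤ 1) → cls Q ≤ (k : ℕ) + 1 →
    ∑ η : {i : Fin n // j ≤ i ∧ i ≤ k} → Bool,
      plen (compOp (fun i => if h : j ≤ i ∧ i ≤ k then η ⟨i, h⟩ else false) j k Q) ≤ plen Q := by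
  intro d
  induction d with
  | zero =>
    intro k hjk hd Q hml hcls
    have hkj : j = k := Fin.ext (by have := Fin.le_def.mp hjk; omega)
    subst hkj
    haveI : Unique {i : Fin n // j ≤ i ∧ i ≤ j} :=
      ⟨⟨⟨j, le_refl j, le_refl j⟩⟩, fun a => Subtype.ext (le_antisymm a.2.2 a.2.1)⟩
    rw [Fintype.sum_equiv (Equiv.funUnique {i : Fin n // j ≤ i ∧ i ≤ j} Bool)
      _ (fun b => plen (compOp (fun i => if _ : j ≤ i ∧ i ≤ j then b else false) j j Q))
      (fun η => by
        rw [show η = fun _ => η default from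
          funext fun i => congrArg η (Subsingleton.elim i default)]
        rfl)]
    rw [Fintype.sum_bool]
    rw [compOp_single, compOp_single,
      dif_pos (⟨le_refl j, le_refl j⟩ : j ≤ j ∧ j ≤ j),
      dif_pos (⟨le_refl j, le_refl j⟩ : j ≤ j ∧ j ≤ j)]
    have := key_ineq j Q hml hcls
    simpa [opE] using this
  | succ d ih =>
    intro k hjk hd Q hml hcls
    have hjkn : (j : ℕ) < (k : ℕ) := by omega
    set k' : Fin n := ⟨(k : ℕ) - 1, by omega⟩ with hk'def
    have hkk' : (k' : ℕ) + 1 = (k : ℕ) := by simp [hk'def]; omega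
    have hjk2 : j ≤ k' := by rw [Fin.le_def]; simp [hk'def]; omega
    have hd' : (k' : ℕ) - (j : ℕ) = d := by simp [hk'def]; omega
    have hk'k : k' ≤ k := by rw [Fin.le_def]; omega
    have hnkk' : ¬ (k ≤ k') := by rw [Fin.le_def]; omega
    have hmemk : j ≤ k ∧ k ≤ k := ⟨hjk, le_refl k⟩
    set f : ({i : Fin n // j ≤ i ∧ i ≤ k} → Bool) → ℕ := fun η =>
      plen (compOp (fun i => if h : j ≤ i ∧ i ≤ k then η ⟨i, h⟩ else false) j k Q) with hf
    let e : ({i : Fin n // j ≤ i ∧ i ≤ k} → Bool) ≃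
        ({i : Fin n // j ≤ i ∧ i ≤ k'} → Bool) × Bool :=
    { toFun := fun η => ⟨fun i => η ⟨i.1, i.2.1, le_trans i.2.2 hk'k⟩, η ⟨k, hmemk⟩⟩
      invFun := fun p i => if h : i.1 ≤ k' then p.1 ⟨i.1, i.2.1, h⟩ else p.2
      left_inv := by
        intro η
        funext i
        dsimp only
        by_cases h : i.1 ≤ k'
        · rw [dif_pos h]
        · rw [dif_neg h]
          have h1 := Fin.le_def.mp i.2.2
          have h2 : ¬ ((i.1 : ℕ) ≤ (k' : ℕ)) := fun hh => h (Fin.le_def.mpr hh)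
          have h3 : k = i.1 := Fin.ext (by omega)
          exact congrArg η (Subtype.ext h3)
      right_inv := by
        intro p
        refine Prod.ext ?_ ?_
        · funext i
          dsimp only
          rw [dif_pos i.2.2]
        · dsimp only
          rw [dif_neg hnkk'] }
    have hkey : ∀ (η' : {i : Fin n // j ≤ i ∧ i ≤ k'} → Bool) (b : Bool),
        f (e.symm (η', b)) =
        plen (compOp (fun i => if h : j ≤ i ∧ i ≤ k' then η' ⟨i, h⟩ else false) j k'
          (opE b k Q)) := by
      intro η' b
      rw [hf]
      dsimp only
      rw [compOp_step _ j k k' (Fin.lt_def.mpr hjkn) hkk' Q]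
      have hεk : (if h : j ≤ k ∧ k ≤ k then e.symm (η', b) ⟨k, h⟩ else false) = b := by
        rw [dif_pos hmemk]
        show (if h : (⟨k, hmemk⟩ : {i : Fin n // j ≤ i ∧ i ≤ k}).1 ≤ k'
          then η' ⟨_, _⟩ else b) = b
        rw [dif_neg hnkk']
      rw [hεk]
      congr 1
      unfold compOp
      apply foldr_congr
      intro i hi
      rw [List.mem_filter] at hi
      have hi2 : j ≤ i ∧ i ≤ k' := of_decide_eq_true hi.2
      show (if h : j ≤ i ∧ i ≤ k then e.symm (η', b) ⟨i, h⟩ else false)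
        = (if h : j ≤ i ∧ i ≤ k' then η' ⟨i, h⟩ else false)
      rw [dif_pos ⟨hi2.1, le_trans hi2.2 hk'k⟩, dif_pos hi2]
      show (if h : (⟨i, hi2.1, le_trans hi2.2 hk'k⟩ : {i : Fin n // j ≤ i ∧ i ≤ k}).1 ≤ k'
        then η' ⟨_, _⟩ else b) = η' ⟨i, hi2⟩
      rw [dif_pos hi2.2]
    calc (∑ η : {i : Fin n // j ≤ i ∧ i ≤ k} → Bool, f η)
        = ∑ p : ({i : Fin n // j ≤ i ∧ i ≤ k'} → Bool) × Bool, f (e.symm p) :=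
          (Equiv.sum_comp e.symm f).symm
      _ = ∑ η' : {i : Fin n // j ≤ i ∧ i ≤ k'} → Bool, ∑ b : Bool, f (e.symm (η', b)) :=
          Fintype.sum_prod_type _
      _ = ∑ η' : {i : Fin n // j ≤ i ∧ i ≤ k'} → Bool,
            (plen (compOp (fun i => if h : j ≤ i ∧ i ≤ k' then η' ⟨i, h⟩ else false) j k'
              (opR k Q)) +
             plen (compOp (fun i => if h : j ≤ i ∧ i ≤ k' then η' ⟨i, h⟩ else false) j k'
              (opJ k Q))) := by
          apply Finset.sum_congr rfl
          intro η' _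
          rw [Fintype.sum_bool, hkey η' true, hkey η' false]
          simp [opE]
      _ = (∑ η' : {i : Fin n // j ≤ i ∧ i ≤ k'} → Bool,
            plen (compOp (fun i => if h : j ≤ i ∧ i ≤ k' then η' ⟨i, h⟩ else false) j k'
              (opR k Q))) +
          (∑ η' : {i : Fin n // j ≤ i ∧ i ≤ k'} → Bool,
            plen (compOp (fun i => if h : j ≤ i ∧ i ≤ k' then η' ⟨i, h⟩ else false) j k'
              (opJ k Q))) := Finset.sum_add_distrib
      _ ≤ plen (opR k Q) + plen (opJ k Q) := by
          have h1 : cls (opR k Q) ≤ (k' : ℕ) + 1 := by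
            rw [hkk']
            exact cls_opE_le (b := true) (k := k) (Q := Q) hcls
          have h2 : cls (opJ k Q) ≤ (k' : ℕ) + 1 := by
            rw [hkk']
            exact cls_opE_le (b := false) (k := k) (Q := Q) hcls
          exact add_le_add
            (ih k' hjk2 hd' (opR k Q) (ml_opR hml) h1)
            (ih k' hjk2 hd' (opJ k Q) (ml_opJ hml) h2)
      _ ≤ plen Q := key_ineq k Q hml hcls

end Aux


/-- Let `P` be a multilinear Boolean polynomial with `cls P = k`, and let
`1 ≤ j ≤ k`. Summing over all `2^{k−j+1}` composite operators
`L = O_j ∘ ⋯ ∘ O_k` with each `O_i ∈ {R_i, J_i}`, we have `Σ_L ‖L(P)‖ ≤ ‖P‖`. -/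
theorem stmt_19 {n : ℕ} (P : MvPolynomial (Fin n) (ZMod 2))
    (hml : ∀ i, degreeOf i P ≤ 1)
    (j k : Fin n) (hjk : j ≤ k) (hcls : cls P = (k : ℕ) + 1) :
    ∑ η : {i : Fin n // j ≤ i ∧ i ≤ k} → Bool,
      plen (compOp (fun i => if h : j ≤ i ∧ i ≤ k then η ⟨i, h⟩ else false) j k P) ≤
      plen P :=
  main_ineq j ((k : ℕ) - (j : ℕ)) k hjk rfl P hml (le_of_eq hcls)
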